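/- Let r ≥ 1, 0 ≤ m ≤ r, δ ≥ 1 be integers, and let H be a nonempty r-uniform hypergraph such that every m-element vertex subset contained in at least one edge of H is contained in at least δ edges. Let n ≥ |V(H)| and let F be a weakly H-saturated r-uniform hypergraph on n vertices. Then every m-element subset U of the n vertices is contained in at least δ − 1 edges of F; consequently |E(F)| ≥ (δ−1)·C(n, m)/C(r, m). -/

import Mathlib

open Finset

/-- `e` belongs to a copy of `H` inside `G`. -/
def IsCopyAt {α β : Type*} [DecidableEq α] [DecidableEq β]
    (H : Finset (Finset α)) (G : Finset (Finset β)) (e : Finset β) : Prop :=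
  ∃ f : α ↪ β, (∀ d ∈ H, d.image f ∈ G) ∧ ∃ d ∈ H, d.image f = e

/-- `F` is weakly `H`-saturated in the complete `r`-uniform hypergraph on `β`. -/
def WSat {α β : Type*} [DecidableEq α] [DecidableEq β] [Fintype β]
    (r : ℕ) (H : Finset (Finset α)) (F : Finset (Finset β)) : Prop :=
  ∃ l : List (Finset β), l.Nodup ∧
    (∀ e : Finset β, e ∈ l ↔ (e.card = r ∧ e ∉ F)) ∧
    ∀ i : Fin l.length, IsCopyAt H (F ∪ (l.take (i + 1)).toFinset) (l.get i)

theorem wsat_lower_bound_via_delta_m {α : Type*} [DecidableEq α]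
    (r m δ n : ℕ) (hr : 1 ≤ r) (hm : m ≤ r) (hδ : 1 ≤ δ)
    (H : Finset (Finset α)) (hne : H.Nonempty)
    (hunif : ∀ e ∈ H, e.card = r)
    (hdeg : ∀ U : Finset α, U.card = m →
      (H.filter fun e => U ⊆ e).Nonempty → δ ≤ (H.filter fun e => U ⊆ e).card)
    (hn : (H.sup id).card ≤ n)
    (F : Finset (Finset (Fin n)))
    (hFunif : ∀ e ∈ F, e.card = r)
    (hF : WSat r H F) :
    (∀ U : Finset (Fin n), U.card = m →
        δ - 1 ≤ (F.filter fun e => U ⊆ e).card) ∧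
      ((δ : ℝ) - 1) * n.choose m / r.choose m ≤ F.card := by
  classical
  obtain ⟨l, hnd, hmem, hcopy⟩ := hF
  obtain ⟨e₀, he₀⟩ := hne
  have he₀V : e₀ ⊆ H.sup id := Finset.le_sup (f := id) he₀
  have hVsub : ∀ d ∈ H, d ⊆ H.sup id := fun d hd => Finset.le_sup (f := id) hd
  have hrn : r ≤ n := by
    have h1 := Finset.card_le_card he₀V
    rw [hunif e₀ he₀] at h1
    omega
  have key : ∀ U : Finset (Fin n), U.card = m →
      δ - 1 ≤ (F.filter fun e => U ⊆ e).card := by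
    intro U hU
    by_cases hT : ∃ j : Fin l.length, U ⊆ l.get j
    · -- some edge containing U is added during the process; take the first one
      set T : Finset (Fin l.length) := univ.filter (fun j => U ⊆ l.get j) with hTdef
      have hTne : T.Nonempty := by
        obtain ⟨j, hj⟩ := hT
        exact ⟨j, Finset.mem_filter.2 ⟨Finset.mem_univ j, hj⟩⟩
      set i := T.min' hTne with hidef
      have hiU : U ⊆ l.get i := by
        have h1 := T.min'_mem hTne
        simp only [hTdef, Finset.mem_filter, Finset.mem_univ, true_and] at h1
        exact h1
      have himin : ∀ j : Fin l.length, U ⊆ l.get j → i ≤ j := fun j hj =>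
        T.min'_le j (Finset.mem_filter.2 ⟨Finset.mem_univ j, hj⟩)
      obtain ⟨f, hfH, d₀, hd₀, hfd₀⟩ := hcopy i
      set U' : Finset α := d₀.filter (fun a => f a ∈ U) with hU'def
      have hU'img : U'.image f = U := by
        apply Finset.Subset.antisymm
        · intro u hu
          simp only [hU'def, Finset.mem_image, Finset.mem_filter] at hu
          obtain ⟨a, ⟨_, ha2⟩, rfl⟩ := hu
          exact ha2
        · intro u hu
          have h2 : u ∈ d₀.image f := hfd₀ ▸ hiU hu
          simp only [Finset.mem_image] at h2
          obtain ⟨a, ha, rfl⟩ := h2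
          exact Finset.mem_image_of_mem f (by simp [hU'def, ha, hu])
      have hU'card : U'.card = m := by
        rw [← hU, ← hU'img, Finset.card_image_of_injective _ f.injective]
      have hδ' : δ ≤ (H.filter fun e => U' ⊆ e).card :=
        hdeg U' hU'card ⟨d₀, Finset.mem_filter.2 ⟨hd₀, Finset.filter_subset _ _⟩⟩
      set S := (H.filter fun e => U' ⊆ e).image (fun d => d.image f) with hSdef
      have hScard : S.card = (H.filter fun e => U' ⊆ e).card :=
        Finset.card_image_of_injective _ (Finset.image_injective f.injective)
      have hSsub : S \ {l.get i} ⊆ F.filter fun e => U ⊆ e := by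
        intro s hs
        rw [Finset.mem_sdiff, Finset.mem_singleton] at hs
        obtain ⟨hs1, hs2⟩ := hs
        simp only [hSdef, Finset.mem_image, Finset.mem_filter] at hs1
        obtain ⟨d, ⟨hdH, hdU'⟩, rfl⟩ := hs1
        have hUsub : U ⊆ d.image f := hU'img ▸ Finset.image_subset_image hdU'
        refine Finset.mem_filter.2 ⟨?_, hUsub⟩
        have h3 := hfH d hdH
        rw [Finset.mem_union] at h3
        rcases h3 with h | h
        · exact h
        · exfalso
          rw [List.mem_toFinset] at h
          obtain ⟨j, hj⟩ := List.mem_iff_get.1 h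
          have hjlen : (j : ℕ) < min ((i : ℕ) + 1) l.length :=
            lt_of_lt_of_le j.2 List.length_take.le
          have hjl : (j : ℕ) < l.length := lt_of_lt_of_le hjlen (min_le_right _ _)
          have hji : (j : ℕ) < (i : ℕ) + 1 := lt_of_lt_of_le hjlen (min_le_left _ _)
          have hget : l.get ⟨j, hjl⟩ = d.image f := by
            have hg := hj
            rw [List.get_eq_getElem, List.getElem_take] at hg
            exact hg
          have hile : i ≤ (⟨j, hjl⟩ : Fin l.length) :=
            himin _ (hget ▸ hUsub)
          have : (j : ℕ) = (i : ℕ) := by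
            have h9 : (i : ℕ) ≤ (j : ℕ) := hile
            omega
          apply hs2
          rw [← hget]
          congr 1
          exact Fin.ext this.symm |>.symm
      have h4 : S.card - 1 ≤ (S \ {l.get i}).card := by
        have := Finset.le_card_sdiff ({l.get i} : Finset (Finset (Fin n))) S
        simpa using this
      have h5 := Finset.card_le_card hSsub
      omega
    · -- no edge containing U is ever added: all such edges are already in F
      push_neg at hT
      have hall : ∀ e : Finset (Fin n), e.card = r → U ⊆ e → e ∈ F := by
        intro e hcard hsub
        by_contra he
        obtain ⟨j, hj⟩ := List.mem_iff_get.1 ((hmem e).2 ⟨hcard, he⟩)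
        exact hT j (hj ▸ hsub)
      obtain ⟨U₀, hU₀e, hU₀card⟩ :=
        Finset.exists_subset_card_eq (s := e₀) (le_of_le_of_eq hm (hunif e₀ he₀).symm)
      set V := H.sup id with hV
      have hU₀V : U₀ ⊆ V := hU₀e.trans he₀V
      have hcard2 : (V \ U₀).card ≤ ((univ : Finset (Fin n)) \ U).card := by
        rw [Finset.card_sdiff_of_subset hU₀V, Finset.card_sdiff_of_subset (Finset.subset_univ U),
          Finset.card_univ, Fintype.card_fin, hU₀card, hU]
        omega
      obtain ⟨t, htsub, htcard⟩ := Finset.exists_subset_card_eq hcard2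
      have e₁ : ↥U₀ ≃ ↥U := Finset.equivOfCardEq (hU₀card.trans hU.symm)
      have e₂ : ↥(V \ U₀) ≃ ↥t := Finset.equivOfCardEq htcard.symm
      have hnpos : 0 < n := lt_of_lt_of_le hr hrn
      set f : α → Fin n := fun a =>
        if h : a ∈ U₀ then (e₁ ⟨a, h⟩ : Fin n)
        else if h' : a ∈ V then (e₂ ⟨a, Finset.mem_sdiff.2 ⟨h', h⟩⟩ : Fin n)
        else ⟨0, hnpos⟩ with hf
      have hfU : ∀ a (h : a ∈ U₀), f a ∈ U := by
        intro a h
        simp only [hf, dif_pos h]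
        exact (e₁ ⟨a, h⟩).2
      have hfnU : ∀ a (h' : a ∈ V) (h : a ∉ U₀), f a ∉ U := by
        intro a h' h
        simp only [hf, dif_neg h, dif_pos h']
        have := htsub (e₂ ⟨a, Finset.mem_sdiff.2 ⟨h', h⟩⟩).2
        rw [Finset.mem_sdiff] at this
        exact this.2
      have hinj : Set.InjOn f V := by
        intro a ha b hb hab
        have ha' : a ∈ V := ha
        have hb' : b ∈ V := hb
        by_cases haU : a ∈ U₀ <;> by_cases hbU : b ∈ U₀
        · simp only [hf, dif_pos haU, dif_pos hbU] at hab
          have := e₁.injective (Subtype.ext hab)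
          exact Subtype.ext_iff.1 this
        · exact absurd (hab ▸ hfU a haU) (hfnU b hb' hbU)
        · exact absurd (hab.symm ▸ hfU b hbU) (hfnU a ha' haU)
        · simp only [hf, dif_neg haU, dif_neg hbU, dif_pos ha', dif_pos hb'] at hab
          have := e₂.injective (Subtype.ext hab)
          exact Subtype.ext_iff.1 this
      have himgU : U₀.image f = U := by
        apply Finset.eq_of_subset_of_card_le
        · intro u hu
          simp only [Finset.mem_image] at hu
          obtain ⟨a, ha, rfl⟩ := hu
          exact hfU a ha
        · rw [Finset.card_image_of_injOn (hinj.mono (by exact_mod_cast hU₀V)), hU₀card, hU]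
      have hδ' : δ ≤ (H.filter fun e => U₀ ⊆ e).card :=
        hdeg U₀ hU₀card ⟨e₀, Finset.mem_filter.2 ⟨he₀, hU₀e⟩⟩
      set S := (H.filter fun e => U₀ ⊆ e).image (fun d => d.image f) with hSdef
      have himg_inj : Set.InjOn (fun d : Finset α => d.image f)
          (H.filter fun e => U₀ ⊆ e) := by
        intro d hd d' hd' h
        simp only [Finset.coe_filter, Set.mem_setOf_eq] at hd hd'
        have hdV : d ⊆ V := hVsub d hd.1
        have hd'V : d' ⊆ V := hVsub d' hd'.1
        have haux : ∀ x y : Finset α, x ⊆ V → y ⊆ V → x.image f = y.image f → x ⊆ y := by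
          intro x y hx hy hxy a ha
          have : f a ∈ y.image f := hxy ▸ Finset.mem_image_of_mem f ha
          simp only [Finset.mem_image] at this
          obtain ⟨b, hb, hba⟩ := this
          have : b = a := hinj (hy hb) (hx ha) hba
          exact this ▸ hb
        exact Finset.Subset.antisymm (haux d d' hdV hd'V h) (haux d' d hd'V hdV h.symm)
      have hScard : S.card = (H.filter fun e => U₀ ⊆ e).card :=
        Finset.card_image_of_injOn himg_inj
      have hSsub : S ⊆ F.filter fun e => U ⊆ e := by
        intro s hs
        simp only [hSdef, Finset.mem_image, Finset.mem_filter] at hs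
        obtain ⟨d, ⟨hdH, hdU₀⟩, rfl⟩ := hs
        have hdV : d ⊆ V := hVsub d hdH
        have hUsub : U ⊆ d.image f := himgU ▸ Finset.image_subset_image hdU₀
        have hcard : (d.image f).card = r := by
          rw [Finset.card_image_of_injOn (hinj.mono (by exact_mod_cast hdV)), hunif d hdH]
        exact Finset.mem_filter.2 ⟨hall _ hcard hUsub, hUsub⟩
      have h5 := Finset.card_le_card hSsub
      omega
  refine ⟨key, ?_⟩
  have hsum : (δ - 1) * n.choose m ≤ F.card * r.choose m := by
    calc (δ - 1) * n.choose m
        = ∑ _U ∈ Finset.powersetCard m (univ : Finset (Fin n)), (δ - 1) := by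
          rw [Finset.sum_const, smul_eq_mul, Finset.card_powersetCard,
            Finset.card_univ, Fintype.card_fin, mul_comm]
      _ ≤ ∑ U ∈ Finset.powersetCard m (univ : Finset (Fin n)),
            (F.filter fun e => U ⊆ e).card := by
          apply Finset.sum_le_sum
          intro U hU
          exact key U (Finset.mem_powersetCard.1 hU).2
      _ = ∑ e ∈ F, ((Finset.powersetCard m (univ : Finset (Fin n))).filter
            fun U => U ⊆ e).card := by
          simp_rw [Finset.card_filter]
          rw [Finset.sum_comm]
      _ = ∑ _e ∈ F, r.choose m := by
          apply Finset.sum_congr rfl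
          intro e he
          have h6 : ((Finset.powersetCard m (univ : Finset (Fin n))).filter
              fun U => U ⊆ e) = e.powersetCard m := by
            ext U
            simp only [Finset.mem_filter, Finset.mem_powersetCard, Finset.subset_univ,
              true_and]
            tauto
          rw [h6, Finset.card_powersetCard, hFunif e he]
      _ = F.card * r.choose m := by rw [Finset.sum_const, smul_eq_mul]
  have hc : (0:ℝ) < (r.choose m : ℝ) := by exact_mod_cast Nat.choose_pos hm
  rw [div_le_iff₀ hc]
  have h7 : ((δ : ℝ) - 1) = ((δ - 1 : ℕ) : ℝ) := by
    rw [Nat.cast_sub hδ, Nat.cast_one]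
  rw [h7]
  exact_mod_cast hsum
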